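/- Let n ≥ 1. In the polynomial ring ℤ[X], the ideal generated by X^n − 1 together with the polynomials ∑_{i=0}^{n/d − 1} X^{d·i} for all proper divisors d of n (divisors d of n with d ≠ n) equals the principal ideal generated by the n-th cyclotomic polynomial Φ_n. Consequently, the associated ring of the cyclotomic field extension F_{1ⁿ} of F₁ is ℤ[X]/(Φ_n) ≅ ℤ[ζ_n], the ring of integers of ℚ(ζ_n). -/

import Mathlib

open Polynomial

private lemma aux_root_prim {K : Type*} [CommRing K] [IsDomain K] {p : ℕ} (hp : p.Prime) [CharP K p]
    {e : ℕ} (he : e ≠ 0) {α : K} (h : (cyclotomic e K).IsRoot α) :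
    IsPrimitiveRoot α (ordCompl[p] e) := by
  haveI : Fact p.Prime := ⟨hp⟩
  have hm : ¬ p ∣ ordCompl[p] e := Nat.not_dvd_ordCompl hp he
  haveI : NeZero ((ordCompl[p] e : ℕ) : K) :=
    ⟨fun h0 => hm ((CharP.cast_eq_zero_iff K p _).mp h0)⟩
  rw [show e = p ^ e.factorization p * ordCompl[p] e from
    (Nat.ordProj_mul_ordCompl_eq_self e p).symm] at h
  exact (isRoot_cyclotomic_prime_pow_mul_iff_of_charP).mp h

private lemma one_mem_span_q (n : ℕ) (hn : 2 ≤ n) :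
    (1 : ℤ[X]) ∈ Ideal.span
      ((fun d => ∏ e ∈ n.properDivisors \ d.divisors, cyclotomic e ℤ) ''
        (n.properDivisors : Set ℕ)) := by
  by_contra hone
  have hne : Ideal.span ((fun d => ∏ e ∈ n.properDivisors \ d.divisors, cyclotomic e ℤ) ''
      (n.properDivisors : Set ℕ)) ≠ ⊤ := fun ht => hone (ht ▸ Submodule.mem_top)
  obtain ⟨M, hM, hle⟩ := Ideal.exists_le_maximal _ hne
  haveI : M.IsPrime := hM.isPrime
  set φ : ℤ[X] →+* ℤ[X] ⧸ M := Ideal.Quotient.mk M with hφdef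
  set α : ℤ[X] ⧸ M := φ X with hα
  have hφ : ∀ f : ℤ[X], φ f = (f.map (Int.castRingHom (ℤ[X] ⧸ M))).eval α := by
    intro f
    have hcomp : φ = (evalRingHom α).comp (mapRingHom (Int.castRingHom (ℤ[X] ⧸ M))) := by
      apply ringHom_ext
      · intro a
        simp only [RingHom.comp_apply, coe_mapRingHom, map_C, eval_C, coe_evalRingHom,
          eq_intCast, map_intCast]
      · simp [hα]
    rw [hcomp]
    simp
  have h1mem : 1 ∈ n.properDivisors := Nat.one_mem_properDivisors_iff_one_lt.mpr hn
  have hroot : ∀ d ∈ n.properDivisors,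
      ∃ e ∈ n.properDivisors, ¬ e ∣ d ∧ (cyclotomic e (ℤ[X] ⧸ M)).IsRoot α := by
    intro d hd
    have h0 : φ (∏ e ∈ n.properDivisors \ d.divisors, cyclotomic e ℤ) = 0 :=
      (Ideal.Quotient.eq_zero_iff_mem).mpr (hle (Ideal.subset_span ⟨d, by simpa using hd, rfl⟩))
    rw [map_prod] at h0
    obtain ⟨e, he, he0⟩ := Finset.prod_eq_zero_iff.mp h0
    rw [Finset.mem_sdiff] at he
    refine ⟨e, he.1, fun hed => he.2 (Nat.mem_divisors.mpr
      ⟨hed, (Nat.pos_of_mem_properDivisors hd).ne'⟩), ?_⟩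
    rw [hφ, map_cyclotomic] at he0
    exact he0
  haveI : CharP (ℤ[X] ⧸ M) (ringChar (ℤ[X] ⧸ M)) := ringChar.charP _
  rcases CharP.char_is_prime_or_zero (ℤ[X] ⧸ M) (ringChar (ℤ[X] ⧸ M)) with hp | hp0
  · -- positive characteristic p
    set p := ringChar (ℤ[X] ⧸ M) with hpdef
    haveI : Fact p.Prime := ⟨hp⟩
    have hprim : ∀ d ∈ n.properDivisors,
        ∃ e ∈ n.properDivisors, ¬ e ∣ d ∧ IsPrimitiveRoot α (ordCompl[p] e) := by
      intro d hd
      obtain ⟨e, he, hed, hr⟩ := hroot d hd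
      exact ⟨e, he, hed, aux_root_prim hp (Nat.pos_of_mem_properDivisors he).ne' hr⟩
    obtain ⟨e₁, he₁, -, hprim₁⟩ := hprim 1 h1mem
    set m := ordCompl[p] e₁ with hmdef
    have key : ∀ d ∈ n.properDivisors, ∃ k, p ^ k * m ∈ n.properDivisors ∧ ¬ p ^ k * m ∣ d := by
      intro d hd
      obtain ⟨e, he, hed, hpr⟩ := hprim d hd
      have hordeq : ordCompl[p] e = m :=
        hpr.eq_orderOf.trans hprim₁.eq_orderOf.symm
      have heq : p ^ e.factorization p * m = e := by
        rw [← hordeq]; exact Nat.ordProj_mul_ordCompl_eq_self e p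
      exact ⟨e.factorization p, by rw [heq]; exact he, by rw [heq]; exact hed⟩
    have he₁0 : e₁ ≠ 0 := (Nat.pos_of_mem_properDivisors he₁).ne'
    have hm0 : m ≠ 0 := (Nat.ordCompl_pos p he₁0).ne'
    have hmn : m ∣ n := (Nat.ordCompl_dvd e₁ p).trans ((Nat.mem_properDivisors.mp he₁).1)
    have hpm : ¬ p ∣ m := Nat.not_dvd_ordCompl hp he₁0
    have hn0 : n ≠ 0 := by omega
    set c := n.factorization p with hcdef
    have hcm : p ^ c * m ∣ n :=
      Nat.Coprime.mul_dvd_of_dvd_of_dvd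
        (Nat.Coprime.pow_left _ ((Nat.Prime.coprime_iff_not_dvd hp).mpr hpm))
        (Nat.ordProj_dvd n p) hmn
    have hklec : ∀ k, p ^ k * m ∣ n → k ≤ c := fun k hk =>
      (Nat.Prime.pow_dvd_iff_le_factorization hp hn0).mp ((dvd_mul_right _ _).trans hk)
    by_cases hcn : p ^ c * m = n
    · rcases Nat.eq_zero_or_pos c with hc0 | hc1
      · -- then m = n, contradiction at d = 1
        obtain ⟨k, hmem, -⟩ := key 1 h1mem
        have hk : k ≤ c := hklec k ((Nat.mem_properDivisors.mp hmem).1)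
        have hk0 : k = 0 := by omega
        rw [hk0, pow_zero, one_mul] at hmem
        rw [hc0, pow_zero, one_mul] at hcn
        rw [hcn] at hmem
        exact absurd (Nat.mem_properDivisors.mp hmem).2 (lt_irrefl n)
      · -- d = p^(c-1) * m
        have hd : p ^ (c - 1) * m ∈ n.properDivisors := by
          rw [Nat.mem_properDivisors]
          constructor
          · rw [← hcn]
            exact mul_dvd_mul (pow_dvd_pow p (Nat.sub_le c 1)) dvd_rfl
          · calc p ^ (c - 1) * m < p ^ c * m :=
                  mul_lt_mul_of_pos_right
                    (Nat.pow_lt_pow_right hp.one_lt (by omega)) (Nat.pos_of_ne_zero hm0)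
              _ = n := hcn
        obtain ⟨k, hmem, hdvd⟩ := key _ hd
        have hk : k ≤ c := hklec k ((Nat.mem_properDivisors.mp hmem).1)
        have hkc : k ≠ c := by
          intro h
          rw [h, hcn] at hmem
          exact absurd (Nat.mem_properDivisors.mp hmem).2 (lt_irrefl n)
        exact hdvd (mul_dvd_mul (pow_dvd_pow p (by omega)) dvd_rfl)
    · -- d = p^c * m is a proper divisor
      have hd : p ^ c * m ∈ n.properDivisors :=
        Nat.mem_properDivisors.mpr
          ⟨hcm, lt_of_le_of_ne (Nat.le_of_dvd (Nat.pos_of_ne_zero hn0) hcm) hcn⟩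
      obtain ⟨k, hmem, hdvd⟩ := key _ hd
      exact hdvd (mul_dvd_mul (pow_dvd_pow p
        (hklec k ((Nat.mem_properDivisors.mp hmem).1))) dvd_rfl)
  · -- characteristic zero
    haveI : CharP (ℤ[X] ⧸ M) 0 := hp0 ▸ (ringChar.charP (ℤ[X] ⧸ M))
    haveI : CharZero (ℤ[X] ⧸ M) := CharP.charP_to_charZero _
    have hprim : ∀ d ∈ n.properDivisors,
        ∃ e ∈ n.properDivisors, ¬ e ∣ d ∧ IsPrimitiveRoot α e := by
      intro d hd
      obtain ⟨e, he, hed, hr⟩ := hroot d hd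
      haveI : NeZero ((e : ℕ) : ℤ[X] ⧸ M) :=
        ⟨Nat.cast_ne_zero.mpr (Nat.pos_of_mem_properDivisors he).ne'⟩
      exact ⟨e, he, hed, isRoot_cyclotomic_iff.mp hr⟩
    obtain ⟨e₁, he₁, -, hprim₁⟩ := hprim 1 h1mem
    obtain ⟨e₂, -, hed, hprim₂⟩ := hprim e₁ he₁
    have : e₂ = e₁ := by rw [hprim₂.eq_orderOf, hprim₁.eq_orderOf]
    exact hed (this ▸ dvd_rfl)

/-- The associated ring of the cyclotomic field extension `F_{1^n}` of `F₁`: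
in `ℤ[X]`, the ideal generated by `X^n - 1` together with the polynomials
`∑_{i=0}^{n/d - 1} X^(d·i)` for all proper divisors `d` of `n` equals the
principal ideal generated by the `n`-th cyclotomic polynomial `Φ_n`.
Hence the associated ring of `F_{1^n}` is `ℤ[X]/(Φ_n) ≅ ℤ[ζ_n]`. -/
theorem cyclotomic_ideal_presentation (n : ℕ) (hn : 1 ≤ n) :
    Ideal.span ({X ^ n - 1} ∪
        ⋃ d ∈ Nat.properDivisors n,
          {∑ i ∈ Finset.range (n / d), (X : Polynomial ℤ) ^ (d * i)})
      = Ideal.span {Polynomial.cyclotomic n ℤ} := by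
  rcases eq_or_lt_of_le hn with h1 | h2
  · -- n = 1
    rw [← h1]
    simp [cyclotomic_one]
  · -- n ≥ 2
    have hn0 : n ≠ 0 := by omega
    set q : ℕ → ℤ[X] := fun d => ∏ e ∈ n.properDivisors \ d.divisors, cyclotomic e ℤ with hq
    set g : ℕ → ℤ[X] := fun d => ∑ i ∈ Finset.range (n / d), (X : ℤ[X]) ^ (d * i) with hg
    have hgq : ∀ d ∈ n.properDivisors, g d = cyclotomic n ℤ * q d := by
      intro d hd
      obtain ⟨hdvd, hlt⟩ := Nat.mem_properDivisors.mp hd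
      have hd0 : 0 < d := Nat.pos_of_dvd_of_pos hdvd (by omega)
      have hXd : (X : ℤ[X]) ^ d - 1 ≠ 0 := by
        intro h
        have := congrArg (eval 0) h
        simp [zero_pow hd0.ne'] at this
      apply mul_right_cancel₀ hXd
      have h1' : g d * ((X : ℤ[X]) ^ d - 1) = X ^ n - 1 := by
        have hgs := geom_sum_mul ((X : ℤ[X]) ^ d) (n / d)
        simp only [hg, ← pow_mul] at hgs ⊢
        rw [hgs, Nat.mul_div_cancel' hdvd]
      have hins : insert n (n.properDivisors \ d.divisors) = n.divisors \ d.divisors := by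
        ext x
        simp only [Finset.mem_insert, Finset.mem_sdiff, Nat.mem_properDivisors, Nat.mem_divisors]
        constructor
        · rintro (rfl | ⟨⟨hx1, hx2⟩, hx3⟩)
          · exact ⟨⟨dvd_rfl, hn0⟩, fun h => absurd (Nat.le_of_dvd hd0 h.1) (by omega)⟩
          · exact ⟨⟨hx1, hn0⟩, hx3⟩
        · rintro ⟨⟨hx1, -⟩, hx3⟩
          rcases eq_or_ne x n with rfl | hx
          · exact Or.inl rfl
          · exact Or.inr ⟨⟨hx1, lt_of_le_of_ne (Nat.le_of_dvd (by omega) hx1) hx⟩, hx3⟩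
      have hnot : n ∉ n.properDivisors \ d.divisors := fun h =>
        absurd (Nat.mem_properDivisors.mp (Finset.mem_sdiff.mp h).1).2 (lt_irrefl n)
      have h2' : (cyclotomic n ℤ * q d) * ((X : ℤ[X]) ^ d - 1) = X ^ n - 1 := by
        calc (cyclotomic n ℤ * q d) * ((X : ℤ[X]) ^ d - 1)
            = ((X : ℤ[X]) ^ d - 1) * ∏ e ∈ n.divisors \ d.divisors, cyclotomic e ℤ := by
              rw [← hins, Finset.prod_insert hnot]; ring
          _ = X ^ n - 1 := X_pow_sub_one_mul_prod_cyclotomic_eq_X_pow_sub_one_of_dvd ℤ hdvd hn0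
      rw [h1', h2']
    apply le_antisymm
    · rw [Ideal.span_le]
      intro f hf
      simp only [Set.mem_union, Set.mem_singleton_iff, Set.mem_iUnion, exists_prop] at hf
      rw [SetLike.mem_coe, Ideal.mem_span_singleton]
      rcases hf with rfl | ⟨d, hd, rfl⟩
      · exact cyclotomic.dvd_X_pow_sub_one n ℤ
      · exact ⟨q d, hgq d hd⟩
    · rw [Ideal.span_le, Set.singleton_subset_iff, SetLike.mem_coe]
      have h1' := one_mem_span_q n h2
      have hmain : ∀ x ∈ Ideal.span (q '' (n.properDivisors : Set ℕ)),
          cyclotomic n ℤ * x ∈ Ideal.span ({X ^ n - 1} ∪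
            ⋃ d ∈ Nat.properDivisors n,
              {∑ i ∈ Finset.range (n / d), (X : Polynomial ℤ) ^ (d * i)}) := by
        intro x hx
        refine Submodule.span_induction ?_ ?_ ?_ ?_ hx
        · rintro y ⟨d, hd, rfl⟩
          have hd' : d ∈ n.properDivisors := by simpa using hd
          rw [← hgq d hd']
          apply Ideal.subset_span
          exact Set.mem_union_right _ (Set.mem_biUnion hd' rfl)
        · simp
        · intro y z _ _ hy hz
          rw [mul_add]; exact Ideal.add_mem _ hy hz
        · intro a y _ hy
          rw [smul_eq_mul, mul_left_comm]
          exact Ideal.mul_mem_left _ a hy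
      simpa using hmain 1 h1'
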